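/- If ω is a Borel probability measure on X satisfying the superstability estimate, then ω(X₀) = 1, i.e., Q(x) < ∞ for ω-almost every x ∈ X. -/

import Mathlib

open MeasureTheory Real Filter
open scoped ENNReal

noncomputable section

/-- A site of the `d`-dimensional integer lattice. -/
abbrev Site (d : ℕ) := Fin d → ℤ

/-- A configuration: at each site, a position `q` and a momentum `p`. -/
abbrev Conf (d : ℕ) := Site d → ℝ × ℝ

/-- ℓ¹ norm on the lattice. -/
def lnorm {d : ℕ} (ν : Site d) : ℤ := ∑ ℓ, |ν ℓ|

/-- ℓ¹ distance on the lattice. -/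
def ldist {d : ℕ} (i j : Site d) : ℤ := ∑ ℓ, |i ℓ - j ℓ|

/-- The cube `Λ_{ν,k}` of center `ν` and side `2k+1`. -/
def cube {d : ℕ} (ν : Site d) (k : ℕ) : Finset (Site d) :=
  Fintype.piFinset fun ℓ => Finset.Icc (ν ℓ - (k : ℤ)) (ν ℓ + (k : ℤ))

/-- The local energy `W_{ν,k}(x)`. -/
noncomputable def Wen {d : ℕ} (U : Polynomial ℝ) (K : ℝ) (ν : Site d) (k : ℕ)
    (x : Conf d) : ℝ :=
  (∑ i ∈ cube ν k, ((x i).2 ^ 2 / 2 + U.eval (x i).1 + 1)) +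
    K / 4 * ∑ i ∈ cube ν k, ∑ j ∈ cube ν k,
      (if ldist i j = 1 then ((x i).1 - (x j).1) ^ 2 else 0)

/-- The functional `Q(x) = sup_ν sup_{k > log^{1/d}(e+|ν|)} W_{ν,k}(x)/(2k+1)^d`,
with values in `[0,∞]`. -/
noncomputable def Qen {d : ℕ} (U : Polynomial ℝ) (K : ℝ) (x : Conf d) : ℝ≥0∞ :=
  ⨆ ν : Site d, ⨆ k : ℕ,
    ⨆ _ : Real.log (Real.exp 1 + (lnorm ν : ℝ)) ^ ((1 : ℝ) / (d : ℝ)) < (k : ℝ),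
      ENNReal.ofReal (Wen U K ν k x / (2 * (k : ℝ) + 1) ^ d)

/-- The good set of configurations `X₀ = {x : Q(x) < ∞}`. -/
def X0 (d : ℕ) (U : Polynomial ℝ) (K : ℝ) : Set (Conf d) := {x | Qen U K x < ⊤}

/-- Superstability estimate for a measure `ω` with constants `Cw`, `lam0`:
`∫ e^{λ W_{ν,k}} dω ≤ e^{Cw (2k+1)^d}` for all `ν`, `k` and `0 < λ ≤ lam0`. -/
def Superstable {d : ℕ} (U : Polynomial ℝ) (K : ℝ) (ω : Measure (Conf d))
    (Cw lam0 : ℝ) : Prop :=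
  ∀ (ν : Site d) (k : ℕ) (lam : ℝ), 0 < lam → lam ≤ lam0 →
    ∫⁻ x, ENNReal.ofReal (Real.exp (lam * Wen U K ν k x)) ∂ω
      ≤ ENNReal.ofReal (Real.exp (Cw * (2 * (k : ℝ) + 1) ^ d))

lemma measurable_Wen {d : ℕ} (U : Polynomial ℝ) (K : ℝ) (ν : Site d) (k : ℕ) :
    Measurable (Wen U K ν k) := by
  unfold Wen
  apply Measurable.add
  · apply Finset.measurable_sum
    intro i _
    have hp : Measurable fun x : Conf d => (x i).2 := (measurable_pi_apply i).snd
    have hq : Measurable fun x : Conf d => (x i).1 := (measurable_pi_apply i).fst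
    exact (((hp.pow_const 2).div_const 2).add (U.continuous.measurable.comp hq)).add
      measurable_const
  · apply Measurable.const_mul
    apply Finset.measurable_sum
    intro i _
    apply Finset.measurable_sum
    intro j _
    split_ifs
    · exact ((measurable_pi_apply i).fst.sub (measurable_pi_apply j).fst).pow_const 2
    · exact measurable_const

lemma cheb {d : ℕ} (U : Polynomial ℝ) (K : ℝ) (ω : Measure (Conf d))
    (Cw lam0 : ℝ) (hlam0 : 0 < lam0) (hss : Superstable U K ω Cw lam0)
    (ν : Site d) (k : ℕ) (t : ℝ) :
    ω {x | t ≤ Wen U K ν k x}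
      ≤ ENNReal.ofReal (Real.exp (Cw * (2 * (k : ℝ) + 1) ^ d - lam0 * t)) := by
  set f : Conf d → ℝ≥0∞ := fun x => ENNReal.ofReal (Real.exp (lam0 * Wen U K ν k x)) with hf
  have hfm : Measurable f :=
    ((measurable_const.mul (measurable_Wen U K ν k)).exp).ennreal_ofReal
  set a : ℝ≥0∞ := ENNReal.ofReal (Real.exp (lam0 * t)) with ha
  have ha0 : a ≠ 0 := by
    simp [ha, ENNReal.ofReal_eq_zero, not_le, Real.exp_pos]
  have haT : a ≠ ⊤ := ENNReal.ofReal_ne_top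
  have hsub : {x | t ≤ Wen U K ν k x} ⊆ {x | a ≤ f x} := by
    intro x hx
    exact ENNReal.ofReal_le_ofReal (Real.exp_le_exp.mpr
      (mul_le_mul_of_nonneg_left hx hlam0.le))
  have h1 : a * ω {x | a ≤ f x} ≤ ∫⁻ x, f x ∂ω :=
    mul_meas_ge_le_lintegral₀ hfm.aemeasurable a
  have h2 : ∫⁻ x, f x ∂ω ≤ ENNReal.ofReal (Real.exp (Cw * (2 * (k : ℝ) + 1) ^ d)) :=
    hss ν k lam0 hlam0 le_rfl
  have h3 : ω {x | t ≤ Wen U K ν k x} ≤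
      ENNReal.ofReal (Real.exp (Cw * (2 * (k : ℝ) + 1) ^ d)) / a := by
    rw [ENNReal.le_div_iff_mul_le (Or.inl ha0) (Or.inl haT), mul_comm]
    exact le_trans (mul_le_mul_right (measure_mono hsub) a) (h1.trans h2)
  refine h3.trans (le_of_eq ?_)
  rw [ha, ← ENNReal.ofReal_div_of_pos (Real.exp_pos _), ← Real.exp_sub]

def adm {d : ℕ} (ν : Site d) (k : ℕ) : Prop :=
  Real.log (Real.exp 1 + (lnorm ν : ℝ)) ^ ((1 : ℝ) / (d : ℝ)) < (k : ℝ)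

lemma lnorm_nonneg {d : ℕ} (ν : Site d) : (0 : ℤ) ≤ lnorm ν :=
  Finset.sum_nonneg fun _ _ => abs_nonneg _

lemma adm_log_lt {d : ℕ} (hd : 0 < d) {ν : Site d} {k : ℕ} (h : adm ν k) :
    Real.log (Real.exp 1 + (lnorm ν : ℝ)) < (k : ℝ) ^ d := by
  have hbase : (1 : ℝ) ≤ Real.exp 1 + (lnorm ν : ℝ) := by
    have : (0 : ℝ) ≤ (lnorm ν : ℝ) := by exact_mod_cast lnorm_nonneg ν
    nlinarith [Real.add_one_le_exp (1 : ℝ)]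
  have hlog : 0 ≤ Real.log (Real.exp 1 + (lnorm ν : ℝ)) := Real.log_nonneg hbase
  set a := Real.log (Real.exp 1 + (lnorm ν : ℝ))
  have hk0 : (0 : ℝ) < (k : ℝ) := lt_of_le_of_lt (Real.rpow_nonneg hlog _) h
  have hrp : (a ^ ((1 : ℝ) / (d : ℝ))) ^ (d : ℝ) < (k : ℝ) ^ (d : ℝ) :=
    Real.rpow_lt_rpow (Real.rpow_nonneg hlog _) h (by exact_mod_cast hd)
  have h1 : (a ^ ((1 : ℝ) / (d : ℝ))) ^ (d : ℝ) = a := by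
    rw [← Real.rpow_mul hlog, one_div_mul_cancel (by exact_mod_cast hd.ne' : (d:ℝ) ≠ 0),
      Real.rpow_one]
  rw [h1, Real.rpow_natCast] at hrp
  exact hrp

lemma adm_one_le {d : ℕ} (hd : 0 < d) {ν : Site d} {k : ℕ} (h : adm ν k) : 1 ≤ k := by
  by_contra hk
  push_neg at hk
  interval_cases k
  have hlt := adm_log_lt hd h
  rw [Nat.cast_zero, zero_pow hd.ne'] at hlt
  have h0 : (0 : ℝ) ≤ (lnorm ν : ℝ) := by exact_mod_cast lnorm_nonneg ν
  have hbase : (1 : ℝ) ≤ Real.exp 1 + (lnorm ν : ℝ) := by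
    nlinarith [Real.add_one_le_exp (1 : ℝ)]
  linarith [Real.log_nonneg hbase]

lemma adm_mem_cube {d : ℕ} (hd : 0 < d) {ν : Site d} {k : ℕ} (h : adm ν k) :
    ν ∈ cube (0 : Site d) ⌈Real.exp ((k : ℝ) ^ d)⌉₊ := by
  set m := ⌈Real.exp ((k : ℝ) ^ d)⌉₊
  have hlt : Real.exp 1 + (lnorm ν : ℝ) < Real.exp ((k : ℝ) ^ d) := by
    have hpos : (0 : ℝ) < Real.exp 1 + (lnorm ν : ℝ) := by
      have : (0 : ℝ) ≤ (lnorm ν : ℝ) := by exact_mod_cast lnorm_nonneg ν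
      positivity
    exact (Real.log_lt_iff_lt_exp hpos).mp (adm_log_lt hd h)
  have hν : (lnorm ν : ℝ) < (m : ℝ) := by
    have h1 : Real.exp ((k : ℝ) ^ d) ≤ (m : ℝ) := Nat.le_ceil _
    nlinarith [Real.exp_pos (1 : ℝ)]
  have hνm : lnorm ν ≤ (m : ℤ) := by exact_mod_cast le_of_lt (by exact_mod_cast hν : (lnorm ν : ℝ) < ((m : ℤ) : ℝ))
  rw [cube, Fintype.mem_piFinset]
  intro ℓ
  have habs : |ν ℓ| ≤ lnorm ν := Finset.single_le_sum (f := fun ℓ => |ν ℓ|)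
    (fun _ _ => abs_nonneg _) (Finset.mem_univ ℓ)
  have : |ν ℓ| ≤ (m : ℤ) := le_trans habs hνm
  rw [Finset.mem_Icc]
  rw [abs_le] at this
  simp only [Pi.zero_apply, zero_sub, zero_add]
  exact this

lemma card_cube {d : ℕ} (m : ℕ) : (cube (0 : Site d) m).card = (2 * m + 1) ^ d := by
  rw [cube, Fintype.card_piFinset]
  have : ∀ ℓ : Fin d, (Finset.Icc ((0:Site d) ℓ - (m:ℤ)) ((0:Site d) ℓ + (m:ℤ))).card
      = 2 * m + 1 := by
    intro ℓ
    simp only [Pi.zero_apply, zero_sub, zero_add, Int.card_Icc]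
    omega
  simp only [this, Finset.prod_const, Finset.card_univ, Fintype.card_fin]

lemma key_est {d : ℕ} (hd : 0 < d) {s : ℝ} (hs : 1 ≤ s) {k : ℕ} (hk : 1 ≤ k) :
    ((2 * ⌈Real.exp ((k:ℝ) ^ d)⌉₊ + 1 : ℕ) : ℝ) ^ d
      * Real.exp (-((d:ℝ) + s) * (2 * (k:ℝ) + 1) ^ d)
      ≤ Real.exp (2 * d - s * ((k:ℝ) + 1)) := by
  have hk1 : (1 : ℝ) ≤ (k : ℝ) := by exact_mod_cast hk
  have hkd : (1 : ℝ) ≤ (k : ℝ) ^ d := one_le_pow₀ hk1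
  set E := Real.exp ((k:ℝ) ^ d) with hE
  have hE2 : (2 : ℝ) ≤ E := by
    calc (2:ℝ) ≤ 1 + (k:ℝ)^d := by linarith
    _ ≤ E := by linarith [Real.add_one_le_exp ((k:ℝ)^d)]
  have hm : (⌈E⌉₊ : ℝ) < E + 1 := Nat.ceil_lt_add_one (by positivity)
  have hexp2 : (4 : ℝ) ≤ Real.exp 2 := by
    have h1 : (2:ℝ) ≤ Real.exp 1 := by linarith [Real.add_one_le_exp (1:ℝ)]
    calc (4:ℝ) = 2 * 2 := by norm_num
    _ ≤ Real.exp 1 * Real.exp 1 := by nlinarith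
    _ = Real.exp 2 := by rw [← Real.exp_add]; norm_num
  have hcard : ((2 * ⌈E⌉₊ + 1 : ℕ) : ℝ) ≤ Real.exp ((k:ℝ)^d + 2) := by
    push_cast
    have : (2:ℝ) * ⌈E⌉₊ + 1 ≤ 4 * E := by nlinarith
    calc (2:ℝ) * ⌈E⌉₊ + 1 ≤ 4 * E := this
    _ ≤ Real.exp 2 * E := by nlinarith
    _ = Real.exp ((k:ℝ)^d + 2) := by rw [hE, ← Real.exp_add]; ring_nf
  have hpow : ((2 * ⌈E⌉₊ + 1 : ℕ) : ℝ) ^ d ≤ Real.exp ((k:ℝ)^d + 2) ^ d :=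
    pow_le_pow_left₀ (by positivity) hcard d
  have hpow2 : Real.exp ((k:ℝ)^d + 2) ^ d = Real.exp ((d:ℝ) * ((k:ℝ)^d + 2)) :=
    (Real.exp_nat_mul _ d).symm
  have hX1 : (k:ℝ) ^ d ≤ (2 * (k:ℝ) + 1) ^ d :=
    pow_le_pow_left₀ (by positivity) (by linarith) d
  have hX2 : (k:ℝ) + 1 ≤ (2 * (k:ℝ) + 1) ^ d := by
    calc (k:ℝ) + 1 ≤ 2 * (k:ℝ) + 1 := by linarith
    _ = (2 * (k:ℝ) + 1) ^ 1 := (pow_one _).symm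
    _ ≤ (2 * (k:ℝ) + 1) ^ d := pow_le_pow_right₀ (by linarith) hd
  have hd1 : (1:ℝ) ≤ (d:ℝ) := by exact_mod_cast hd
  calc ((2 * ⌈E⌉₊ + 1 : ℕ) : ℝ) ^ d * Real.exp (-((d:ℝ) + s) * (2 * (k:ℝ) + 1) ^ d)
      ≤ Real.exp ((d:ℝ) * ((k:ℝ)^d + 2)) * Real.exp (-((d:ℝ) + s) * (2 * (k:ℝ) + 1) ^ d) := by
        rw [← hpow2]; exact mul_le_mul_of_nonneg_right hpow (Real.exp_pos _).le
    _ = Real.exp ((d:ℝ) * ((k:ℝ)^d + 2) + -((d:ℝ) + s) * (2 * (k:ℝ) + 1) ^ d) :=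
        (Real.exp_add _ _).symm
    _ ≤ Real.exp (2 * d - s * ((k:ℝ) + 1)) := by
        apply Real.exp_le_exp.mpr
        nlinarith [mul_le_mul_of_nonneg_left hX1 (by linarith : (0:ℝ) ≤ (d:ℝ)),
          mul_le_mul_of_nonneg_left hX2 (by linarith : (0:ℝ) ≤ s)]


/-- A superstable probability measure gives full measure to `X₀`. -/
theorem statement5 {d : ℕ} (hd : 0 < d) (U : Polynomial ℝ) (hUdeg : U.degree = 4)
    (hUpos : ∀ y : ℝ, 0 ≤ U.eval y) (hUlead : 0 < U.leadingCoeff)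
    (K : ℝ) (hK : 0 < K)
    (ω : Measure (Conf d)) [IsProbabilityMeasure ω]
    (Cw lam0 : ℝ) (hCw : 0 < Cw) (hlam0 : 0 < lam0)
    (hss : Superstable U K ω Cw lam0) :
    ω (X0 d U K) = 1 := by
  classical
  -- the key bound: for each n, the bad set has measure at most F n
  have key : ∀ n : ℕ, ω {x | Qen U K x = ⊤}
      ≤ ENNReal.ofReal (Real.exp (2 * d - ((n:ℝ) + 1))) * 2 := by
    intro n
    set s : ℝ := (n : ℝ) + 1 with hs_def
    have hs1 : 1 ≤ s := by simp [hs_def]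
    set M : ℝ := (Cw + d + s) / lam0 with hM_def
    have hlamM : lam0 * M = Cw + ((d : ℝ) + s) := by
      field_simp [hM_def]
      rw [hM_def]; field_simp; ring
    set S : Site d → ℕ → Set (Conf d) :=
      fun ν k => {x | M * (2 * (k:ℝ) + 1) ^ d ≤ Wen U K ν k x} with hS
    -- inclusion into the union
    have hincl : {x | Qen U K x = ⊤} ⊆ ⋃ ν, ⋃ k, ⋃ _ : adm ν k, S ν k := by
      intro x hx
      have hlt : ENNReal.ofReal M < Qen U K x := by
        rw [Set.mem_setOf_eq] at hx; rw [hx]; exact ENNReal.ofReal_lt_top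
      simp only [Qen, lt_iSup_iff] at hlt
      obtain ⟨ν, k, hadm, hlt⟩ := hlt
      have hMlt : M < Wen U K ν k x / (2 * (k:ℝ) + 1) ^ d := by
        by_contra hc
        push_neg at hc
        exact absurd (hlt.trans_le (ENNReal.ofReal_le_ofReal hc)) (lt_irrefl _)
      have hpos : (0:ℝ) < (2 * (k:ℝ) + 1) ^ d := by positivity
      refine Set.mem_iUnion.2 ⟨ν, Set.mem_iUnion.2 ⟨k, Set.mem_iUnion.2 ⟨hadm, ?_⟩⟩⟩
      exact le_of_lt ((lt_div_iff₀ hpos).mp hMlt)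
    -- per-pair bound
    set B : ℕ → ℝ≥0∞ :=
      fun k => ENNReal.ofReal (Real.exp (-((d:ℝ) + s) * (2 * (k:ℝ) + 1) ^ d)) with hB
    have hpair : ∀ ν k, ω (⋃ _ : adm ν k, S ν k) ≤ if adm ν k then B k else 0 := by
      intro ν k
      rw [Set.iUnion_eq_if]
      split_ifs with h
      · refine (cheb U K ω Cw lam0 hlam0 hss ν k _).trans (le_of_eq ?_)
        congr 1
        have : lam0 * (M * (2 * (k:ℝ) + 1) ^ d) = (Cw + ((d:ℝ) + s)) * (2 * (k:ℝ) + 1) ^ d := by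
          rw [← mul_assoc, hlamM]
        rw [this]; ring_nf
      · simp
    -- sum over ν for fixed k
    have hksum : ∀ k : ℕ, (∑' ν : Site d, if adm ν k then B k else 0)
        ≤ ENNReal.ofReal (Real.exp (2 * d - s * ((k:ℝ) + 1))) := by
      intro k
      rcases Nat.eq_zero_or_pos k with hk0 | hk1
      · have : ∀ ν : Site d, (if adm ν k then B k else 0) = 0 := by
          intro ν
          rw [if_neg]
          intro hadm
          exact absurd (adm_one_le hd hadm) (by omega)
        simp [this]
      · set m := ⌈Real.exp ((k:ℝ) ^ d)⌉₊ with hm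
        have hsupp : ∀ ν : Site d, ν ∉ cube (0 : Site d) m →
            (if adm ν k then B k else 0) = 0 := by
          intro ν hν
          rw [if_neg]
          intro hadm
          exact hν (adm_mem_cube hd hadm)
        rw [tsum_eq_sum hsupp]
        calc (∑ ν ∈ cube (0 : Site d) m, if adm ν k then B k else 0)
            ≤ ∑ _ν ∈ cube (0 : Site d) m, B k := by
              apply Finset.sum_le_sum
              intro ν _
              split_ifs <;> simp
          _ = ((cube (0 : Site d) m).card : ℝ≥0∞) * B k := by
              rw [Finset.sum_const, nsmul_eq_mul]
          _ = (((2 * m + 1) ^ d : ℕ) : ℝ≥0∞) * B k := by rw [card_cube]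
          _ ≤ ENNReal.ofReal (Real.exp (2 * d - s * ((k:ℝ) + 1))) := by
              rw [← ENNReal.ofReal_natCast ((2 * m + 1) ^ d), hB,
                ← ENNReal.ofReal_mul (by positivity)]
              apply ENNReal.ofReal_le_ofReal
              have := key_est hd hs1 hk1
              calc (((2 * m + 1) ^ d : ℕ) : ℝ) * Real.exp (-((d:ℝ) + s) * (2 * (k:ℝ) + 1) ^ d)
                  = ((2 * m + 1 : ℕ) : ℝ) ^ d
                      * Real.exp (-((d:ℝ) + s) * (2 * (k:ℝ) + 1) ^ d) := by push_cast; ring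
                _ ≤ Real.exp (2 * d - s * ((k:ℝ) + 1)) := key_est hd hs1 hk1
    -- assemble
    calc ω {x | Qen U K x = ⊤}
        ≤ ω (⋃ ν, ⋃ k, ⋃ _ : adm ν k, S ν k) := measure_mono hincl
      _ ≤ ∑' ν : Site d, ω (⋃ k, ⋃ _ : adm ν k, S ν k) := measure_iUnion_le _
      _ ≤ ∑' ν : Site d, ∑' k : ℕ, ω (⋃ _ : adm ν k, S ν k) :=
          ENNReal.tsum_le_tsum fun ν => measure_iUnion_le _
      _ ≤ ∑' ν : Site d, ∑' k : ℕ, (if adm ν k then B k else 0) :=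
          ENNReal.tsum_le_tsum fun ν => ENNReal.tsum_le_tsum fun k => hpair ν k
      _ = ∑' k : ℕ, ∑' ν : Site d, (if adm ν k then B k else 0) := ENNReal.tsum_comm
      _ ≤ ∑' k : ℕ, ENNReal.ofReal (Real.exp (2 * d - s * ((k:ℝ) + 1))) :=
          ENNReal.tsum_le_tsum hksum
      _ ≤ ENNReal.ofReal (Real.exp (2 * d - s)) * 2 := by
          have heq : ∀ k : ℕ, ENNReal.ofReal (Real.exp (2 * d - s * ((k:ℝ) + 1)))
              = ENNReal.ofReal (Real.exp (2 * d - s)) * (ENNReal.ofReal (Real.exp (-s))) ^ k := by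
            intro k
            rw [← ENNReal.ofReal_pow (Real.exp_pos _).le, ← Real.exp_nat_mul,
              ← ENNReal.ofReal_mul (Real.exp_pos _).le, ← Real.exp_add]
            congr 1
            ring
          simp_rw [heq]
          rw [ENNReal.tsum_mul_left, ENNReal.tsum_geometric]
          apply mul_le_mul_right
          have hr : ENNReal.ofReal (Real.exp (-s)) ≤ 2⁻¹ := by
            have h2e : (2:ℝ) ≤ Real.exp 1 := by linarith [Real.add_one_le_exp (1:ℝ)]
            have : Real.exp (-s) ≤ (2:ℝ)⁻¹ := by
              rw [Real.exp_neg]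
              rw [inv_le_inv₀ (Real.exp_pos _) (by norm_num)]
              calc (2:ℝ) ≤ Real.exp 1 := h2e
                _ ≤ Real.exp s := Real.exp_le_exp.mpr hs1
            calc ENNReal.ofReal (Real.exp (-s)) ≤ ENNReal.ofReal ((2:ℝ)⁻¹) :=
                ENNReal.ofReal_le_ofReal this
              _ = 2⁻¹ := by
                rw [ENNReal.ofReal_inv_of_pos (by norm_num)]
                norm_num
          calc (1 - ENNReal.ofReal (Real.exp (-s)))⁻¹ ≤ (1 - 2⁻¹)⁻¹ :=
              ENNReal.inv_le_inv' (tsub_le_tsub_left hr 1)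
            _ = 2 := by rw [ENNReal.one_sub_inv_two, inv_inv]
      _ ≤ ENNReal.ofReal (Real.exp (2 * d - ((n:ℝ) + 1))) * 2 := le_rfl
  -- limit as n → ∞
  have hnull : ω {x | Qen U K x = ⊤} = 0 := by
    have htend : Tendsto (fun n : ℕ => ENNReal.ofReal (Real.exp (2 * d - ((n:ℝ) + 1))) * 2)
        atTop (nhds 0) := by
      have hreal : Tendsto (fun n : ℕ => Real.exp (2 * d - ((n:ℝ) + 1))) atTop (nhds 0) := by
        have : ∀ n : ℕ, Real.exp (2 * d - ((n:ℝ) + 1))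
            = Real.exp (2 * d - 1) * Real.exp (-1) ^ n := by
          intro n
          rw [← Real.exp_nat_mul, ← Real.exp_add]
          congr 1
          ring
        simp_rw [this]
        have := tendsto_pow_atTop_nhds_zero_of_lt_one (Real.exp_pos (-1)).le
          (Real.exp_lt_one_iff.mpr (by norm_num))
        simpa using this.const_mul (Real.exp (2 * d - 1))
      have h1 : Tendsto (fun n : ℕ => ENNReal.ofReal (Real.exp (2 * d - ((n:ℝ) + 1))))
          atTop (nhds 0) := by
        have := (ENNReal.tendsto_ofReal hreal)
        simpa using this
      have := ENNReal.Tendsto.mul_const h1 (Or.inr (by norm_num : (2:ℝ≥0∞) ≠ ⊤))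
      simpa using this
    have := ge_of_tendsto' htend key
    exact le_antisymm this (by positivity)
  -- conclude
  have hsub : (X0 d U K)ᶜ ⊆ {x | Qen U K x = ⊤} := by
    intro x hx
    simp only [X0, Set.mem_compl_iff, Set.mem_setOf_eq, not_lt, top_le_iff] at hx
    exact hx
  have hcompl : ω ((X0 d U K)ᶜ) = 0 := measure_mono_null hsub hnull
  have h1 : (1 : ℝ≥0∞) ≤ ω (X0 d U K) := by
    have : ω Set.univ ≤ ω (X0 d U K) + ω ((X0 d U K)ᶜ) := by
      rw [← Set.union_compl_self (X0 d U K)]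
      exact measure_union_le _ _
    rw [measure_univ, hcompl, add_zero] at this
    exact this
  exact le_antisymm prob_le_one h1
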